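/- arXiv:1402.1905 — 2 statements merged into one kernel-verified Lean document; each statement's English description precedes it below -/
import Mathlib

section
/- For p = 1: the pushforward of the measure γ(dz) = π^{-1}(1+|z|²)^{-2} dz on ℂ under any Möbius transformation z ↦ (az+b)/(cz+d) with ad − bc ≠ 0 equals the pushforward of γ under some invertible affine map z ↦ αz + β (α ≠ 0). -/
open MeasureTheory Real

/-- The standard complex Cauchy measure `γ(dz) = π⁻¹ (1+|z|²)⁻² dz` on ℂ. -/
noncomputable def gammaC1 : Measure ℂ :=
  (volume : Measure ℂ).withDensity fun z =>
    ENNReal.ofReal (π⁻¹ * ((1 + ‖z‖ ^ 2) ^ 2)⁻¹)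

lemma det_mul_clm (w : ℂ) :
    ((ContinuousLinearMap.smulRight (1 : ℂ →L[ℂ] ℂ) w).restrictScalars ℝ).det
      = Complex.normSq w := by
  have h : ((ContinuousLinearMap.smulRight (1 : ℂ →L[ℂ] ℂ) w).restrictScalars ℝ).toLinearMap
      = Algebra.lmul ℝ ℂ w := by
    ext z
    simp [mul_comm]
  rw [ContinuousLinearMap.det, h, ← Algebra.norm_apply, Algebra.norm_complex_apply]

lemma null_line (w₀ w₁ : ℂ) (h : w₀ ≠ 0 ∨ w₁ ≠ 0) :
    (volume : Measure ℂ) {z : ℂ | w₀ * z + w₁ = 0} = 0 := by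
  rcases eq_or_ne w₀ 0 with h0 | h0
  · subst h0
    have hw1 : w₁ ≠ 0 := h.resolve_left (by simp)
    have he : {z : ℂ | (0:ℂ) * z + w₁ = 0} = ∅ := by
      ext z; simp [hw1]
    rw [he]; simp
  · apply measure_mono_null (t := {-w₁ / w₀})
    · intro z hz
      simp only [Set.mem_setOf_eq] at hz
      simp only [Set.mem_singleton_iff]
      field_simp
      linear_combination hz
    · exact measure_singleton _

lemma gamma_null_line (w₀ w₁ : ℂ) (h : w₀ ≠ 0 ∨ w₁ ≠ 0) :
    gammaC1 {z : ℂ | w₀ * z + w₁ = 0} = 0 :=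
  (withDensity_absolutelyContinuous _ _) (null_line w₀ w₁ h)

lemma inter_ae_self {α : Type*} [MeasurableSpace α] (μ : Measure α) (T s : Set α)
    (h : μ sᶜ = 0) : (T ∩ s : Set α) =ᵐ[μ] T := by
  rw [MeasureTheory.ae_eq_set]
  refine ⟨?_, ?_⟩
  · have he : (T ∩ s) \ T = ∅ := Set.diff_eq_empty.2 Set.inter_subset_left
    simp [he]
  · apply measure_mono_null _ h
    intro x hx
    exact fun hxs => hx.2 ⟨hx.1, hxs⟩

local notation "conj'" => starRingEnd ℂ

lemma gamma_map_unitary (u v : ℂ) (huv : Complex.normSq u + Complex.normSq v = 1) :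
    Measure.map (fun z => (u * z + v) / (-(conj' v) * z + conj' u)) gammaC1 = gammaC1 := by
  set f : ℂ → ENNReal := fun z =>
    ENNReal.ofReal (π⁻¹ * ((1 + ‖z‖ ^ 2) ^ 2)⁻¹) with hf
  set φ : ℂ → ℂ := fun z => (u * z + v) / (-(conj' v) * z + conj' u) with hφ
  have keyC : (conj' u) * u + (conj' v) * v = 1 := by
    rw [← Complex.normSq_eq_conj_mul_self, ← Complex.normSq_eq_conj_mul_self]
    exact_mod_cast congrArg (Complex.ofReal) huv
  have hu0 : u ≠ 0 ∨ v ≠ 0 := by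
    by_contra hc
    push_neg at hc
    rw [hc.1, hc.2] at huv; simp at huv
  have hφm : Measurable φ := by fun_prop
  -- the good sets
  set s : Set ℂ := {z | -(conj' v) * z + conj' u ≠ 0} with hs
  set t : Set ℂ := {w | (conj' v) * w + u ≠ 0} with ht
  have hs_open : IsOpen s := by
    have : Continuous fun z : ℂ => -(conj' v) * z + conj' u := by fun_prop
    exact isOpen_compl_singleton.preimage this
  have ht_open : IsOpen t := by
    have : Continuous fun w : ℂ => (conj' v) * w + u := by fun_prop
    exact isOpen_compl_singleton.preimage this
  have hsc : (volume : Measure ℂ) sᶜ = 0 := by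
    have : sᶜ = {z : ℂ | -(conj' v) * z + conj' u = 0} := by
      ext z; simp [hs]
    rw [this]
    apply null_line
    rcases hu0 with h | h
    · right; simpa using h
    · left; simpa using h
  have htc : (volume : Measure ℂ) tᶜ = 0 := by
    have : tᶜ = {w : ℂ | (conj' v) * w + u = 0} := by
      ext w; simp [ht]
    rw [this]
    apply null_line
    rcases hu0 with h | h
    · right; exact h
    · left; simpa using h
  -- pointwise facts on s
  have hsum : ∀ z : ℂ, Complex.normSq (-(conj' v) * z + conj' u) + Complex.normSq (u * z + v)
      = 1 + Complex.normSq z := by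
    intro z
    have hC : ((Complex.normSq (-(conj' v) * z + conj' u) : ℂ))
        + (Complex.normSq (u * z + v) : ℂ) = 1 + (Complex.normSq z : ℂ) := by
      rw [Complex.normSq_eq_conj_mul_self, Complex.normSq_eq_conj_mul_self,
        Complex.normSq_eq_conj_mul_self]
      simp only [map_add, map_mul, map_neg, Complex.conj_conj]
      linear_combination (1 + (conj' z) * z) * keyC
    exact_mod_cast hC
  have hden : ∀ z ∈ s, (conj' v) * φ z + u = (-(conj' v) * z + conj' u)⁻¹ := by
    intro z hz
    simp only [hs, Set.mem_setOf_eq] at hz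
    simp only [hφ]
    generalize hD : -(conj' v) * z + conj' u = D at hz ⊢
    field_simp [hz]
    linear_combination keyC - u * hD
  -- derivative
  have hderiv : ∀ z ∈ s,
      HasFDerivAt φ ((ContinuousLinearMap.smulRight (1 : ℂ →L[ℂ] ℂ)
        (((-(conj' v) * z + conj' u) ^ 2)⁻¹)).restrictScalars ℝ) z := by
    intro z hz
    simp only [hs, Set.mem_setOf_eq] at hz
    have h₁ : HasDerivAt (fun z : ℂ => u * z + v) u z := by
      simpa using ((hasDerivAt_id z).const_mul u).add_const v
    have h₂ : HasDerivAt (fun z : ℂ => -(conj' v) * z + conj' u) (-(conj' v)) z := by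
      simpa using ((hasDerivAt_id z).const_mul (-(conj' v))).add_const (conj' u)
    have hd := h₁.div h₂ hz
    have hval : (u * (-(conj' v) * z + conj' u) - (u * z + v) * -(conj' v))
        / (-(conj' v) * z + conj' u) ^ 2 = ((-(conj' v) * z + conj' u) ^ 2)⁻¹ := by
      rw [inv_eq_one_div, div_eq_div_iff (pow_ne_zero 2 hz) (pow_ne_zero 2 hz)]
      ring_nf
      linear_combination ((-(conj' v) * z + conj' u) ^ 2) * keyC
    rw [hval] at hd
    exact (hasDerivAt_iff_hasFDerivAt.1 hd).restrictScalars ℝ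
  -- injectivity on s
  set ψ : ℂ → ℂ := fun w => ((conj' u) * w - v) / ((conj' v) * w + u) with hψ
  have hleft : ∀ z ∈ s, ψ (φ z) = z := by
    intro z hz
    have hE := hden z hz
    simp only [hs, Set.mem_setOf_eq] at hz
    have hnum : (conj' u) * φ z - v = z * (-(conj' v) * z + conj' u)⁻¹ := by
      simp only [hφ]
      generalize hD : -(conj' v) * z + conj' u = D at hz ⊢
      field_simp [hz]
      linear_combination z * keyC + v * hD
    rw [hψ]
    simp only [hnum, hE]
    generalize hD : -(conj' v) * z + conj' u = D at hz ⊢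
    rw [div_eq_iff (inv_ne_zero hz)]
  have hinj : Set.InjOn φ s := by
    intro z₁ h₁ z₂ h₂ he
    rw [← hleft z₁ h₁, ← hleft z₂ h₂, he]
  -- image identity towards any measurable S
  have himem : ∀ z ∈ s, φ z ∈ t := by
    intro z hz
    have hE := hden z hz
    simp only [hs, Set.mem_setOf_eq] at hz
    simp only [ht, Set.mem_setOf_eq, hE]
    exact inv_ne_zero hz
  have hsurj : ∀ w ∈ t, ∃ z ∈ s, φ z = w := by
    intro w hw
    simp only [ht, Set.mem_setOf_eq] at hw
    have hDz : -(conj' v) * ψ w + conj' u = ((conj' v) * w + u)⁻¹ := by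
      simp only [hψ]
      generalize hE : (conj' v) * w + u = E at hw ⊢
      field_simp [hw]
      linear_combination keyC - (conj' u) * hE
    refine ⟨ψ w, ?_, ?_⟩
    · simp only [hs, Set.mem_setOf_eq, hDz]
      exact inv_ne_zero hw
    · have hnum : u * ψ w + v = w * ((conj' v) * w + u)⁻¹ := by
        simp only [hψ]
        generalize hE : (conj' v) * w + u = E at hw ⊢
        field_simp [hw]
        linear_combination w * keyC - v * hE
      simp only [hφ, hnum, hDz]
      rw [div_eq_iff (inv_ne_zero hw)]
  -- main computation
  have hgf : gammaC1 = (volume : Measure ℂ).withDensity f := rfl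
  refine Measure.ext fun S hS => ?_
  rw [Measure.map_apply hφm hS, hgf, withDensity_apply f (hφm hS), withDensity_apply f hS]
  have hT' : MeasurableSet (φ ⁻¹' S ∩ s) := (hφm hS).inter hs_open.measurableSet
  have himg : φ '' (φ ⁻¹' S ∩ s) = S ∩ t := by
    apply Set.Subset.antisymm
    · rintro w ⟨z, ⟨hzS, hzs⟩, rfl⟩
      exact ⟨hzS, himem z hzs⟩
    · rintro w ⟨hwS, hwt⟩
      obtain ⟨z, hzs, rfl⟩ := hsurj w hwt
      exact ⟨z, ⟨hwS, hzs⟩, rfl⟩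
  have hpt : ∀ z ∈ φ ⁻¹' S ∩ s,
      ENNReal.ofReal |((ContinuousLinearMap.smulRight (1 : ℂ →L[ℂ] ℂ)
          (((-(conj' v) * z + conj' u) ^ 2)⁻¹)).restrictScalars ℝ).det| * f (φ z) = f z := by
    intro z hz
    have hzs := hz.2
    simp only [hs, Set.mem_setOf_eq] at hzs
    have hns : Complex.normSq (-(conj' v) * z + conj' u) ≠ 0 := by
      simpa [Complex.normSq_eq_zero] using hzs
    have hDqpos : 0 < Complex.normSq (-(conj' v) * z + conj' u) :=
      lt_of_le_of_ne (Complex.normSq_nonneg _) (Ne.symm hns)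
    rw [det_mul_clm]
    have habs : Complex.normSq (((-(conj' v) * z + conj' u) ^ 2)⁻¹)
        = ((Complex.normSq (-(conj' v) * z + conj' u)) ^ 2)⁻¹ := by
      rw [Complex.normSq_inv, map_pow]
    rw [habs, abs_of_nonneg (by positivity), hf]
    simp only
    rw [← ENNReal.ofReal_mul (by positivity)]
    congr 1
    have h1 : ‖φ z‖ ^ 2
        = Complex.normSq (u * z + v) / Complex.normSq (-(conj' v) * z + conj' u) := by
      simp only [hφ, Complex.sq_norm, Complex.normSq_div]
    rw [h1, Complex.sq_norm]
    have hsz := hsum z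
    have h3 : (0:ℝ) < 1 + Complex.normSq z := by linarith [Complex.normSq_nonneg z]
    generalize hDq : Complex.normSq (-(conj' v) * z + conj' u) = Dq at hns hDqpos hsz ⊢
    generalize hN : Complex.normSq (u * z + v) = N at hsz ⊢
    generalize hnz : Complex.normSq z = nz at hsz h3 ⊢
    have h2 : 1 + N / Dq = (1 + nz) / Dq := by
      field_simp
      linarith
    rw [h2, div_pow, inv_div]
    field_simp
  have hae1 : (φ ⁻¹' S ∩ s : Set ℂ) =ᵐ[volume] φ ⁻¹' S := inter_ae_self _ _ _ hsc
  have hae2 : (S ∩ t : Set ℂ) =ᵐ[volume] S := inter_ae_self _ _ _ htc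
  calc ∫⁻ z in φ ⁻¹' S, f z
      = ∫⁻ z in φ ⁻¹' S ∩ s, f z := (setLIntegral_congr hae1).symm
    _ = ∫⁻ z in φ ⁻¹' S ∩ s,
          ENNReal.ofReal |((ContinuousLinearMap.smulRight (1 : ℂ →L[ℂ] ℂ)
            (((-(conj' v) * z + conj' u) ^ 2)⁻¹)).restrictScalars ℝ).det| * f (φ z) :=
        setLIntegral_congr_fun hT' (fun z hz => (hpt z hz).symm)
    _ = ∫⁻ w in φ '' (φ ⁻¹' S ∩ s), f w :=
        (lintegral_image_eq_lintegral_abs_det_fderiv_mul volume hT'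
          (fun z hz => (hderiv z hz.2).hasFDerivWithinAt)
          (hinj.mono Set.inter_subset_right) f).symm
    _ = ∫⁻ w in S ∩ t, f w := by rw [himg]
    _ = ∫⁻ w in S, f w := setLIntegral_congr hae2


/-- The pushforward of `γ` under any Möbius transformation equals its pushforward under some
invertible affine map of ℂ. -/
theorem stmt9 (a b c d : ℂ) (h : a * d - b * c ≠ 0) :
    ∃ α β : ℂ, α ≠ 0 ∧
      Measure.map (fun z => (a * z + b) / (c * z + d)) gammaC1 =
        Measure.map (fun z => α * z + β) gammaC1 := by
  have hcd : c ≠ 0 ∨ d ≠ 0 := by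
    by_contra hc
    push_neg at hc
    rw [hc.1, hc.2] at h
    simp at h
  set r : ℝ := Real.sqrt (Complex.normSq c + Complex.normSq d) with hr
  have hsumpos : 0 < Complex.normSq c + Complex.normSq d := by
    rcases hcd with h' | h'
    · have := Complex.normSq_pos.2 h'
      nlinarith [Complex.normSq_nonneg d]
    · have := Complex.normSq_pos.2 h'
      nlinarith [Complex.normSq_nonneg c]
  have hrpos : 0 < r := Real.sqrt_pos.2 hsumpos
  have hr2 : r ^ 2 = Complex.normSq c + Complex.normSq d := Real.sq_sqrt hsumpos.le
  have hrC : (r : ℂ) ≠ 0 := by exact_mod_cast hrpos.ne'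
  have hr2C : ((r : ℂ)) ^ 2 = (Complex.normSq c : ℂ) + (Complex.normSq d : ℂ) := by
    rw [← Complex.ofReal_pow, hr2]
    push_cast
    ring
  set u : ℂ := conj' d / r with hu
  set v : ℂ := -conj' c / r with hv
  have huv : Complex.normSq u + Complex.normSq v = 1 := by
    rw [hu, hv]
    rw [Complex.normSq_div, Complex.normSq_div]
    simp only [Complex.normSq_neg, Complex.normSq_conj, Complex.normSq_ofReal]
    rw [← add_div]
    rw [div_eq_one_iff_eq (by nlinarith)]
    nlinarith [hr2]
  have hcv : -(conj' v) = c / (r : ℂ) := by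
    rw [hv]
    simp only [map_div₀, map_neg, Complex.conj_conj, Complex.conj_ofReal, neg_neg]
    ring
  have hcu : conj' u = d / (r : ℂ) := by
    rw [hu]
    simp [map_div₀, Complex.conj_ofReal]
  set α : ℂ := (a * d - b * c) / ((r : ℂ) ^ 2) with hα
  set β : ℂ := (b * conj' d + a * conj' c) / ((r : ℂ) ^ 2) with hβ
  have hα0 : α ≠ 0 := div_ne_zero h (pow_ne_zero 2 hrC)
  have key1 : conj' c * c = (Complex.normSq c : ℂ) := Complex.normSq_eq_conj_mul_self.symm
  have key2 : conj' d * d = (Complex.normSq d : ℂ) := Complex.normSq_eq_conj_mul_self.symm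
  have hmain : ∀ z : ℂ, c * z + d ≠ 0 →
      (a * z + b) / (c * z + d)
        = α * ((u * z + v) / (-(conj' v) * z + conj' u)) + β := by
    intro z hz
    have hden : -(conj' v) * z + conj' u = (c * z + d) / (r : ℂ) := by
      rw [hcv, hcu]; ring
    have hnumr : u * z + v = (conj' d * z - conj' c) / (r : ℂ) := by
      rw [hu, hv]; ring
    rw [hden, hnumr, hα, hβ]
    rw [div_div_div_cancel_right₀ hrC]
    have expand : (a * d - b * c) / (r:ℂ)^2 * ((conj' d * z - conj' c) / (c * z + d))
          + (b * conj' d + a * conj' c) / (r:ℂ)^2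
        = ((a * d - b * c) * (conj' d * z - conj' c)
            + (b * conj' d + a * conj' c) * (c * z + d)) / ((r:ℂ)^2 * (c * z + d)) := by
      field_simp
    have hnum : (a * d - b * c) * (conj' d * z - conj' c)
          + (b * conj' d + a * conj' c) * (c * z + d) = (a * z + b) * (r:ℂ)^2 := by
      linear_combination (a*z+b) * key1 + (a*z+b) * key2 - (a*z+b) * hr2C
    rw [expand, hnum, mul_comm ((r:ℂ)^2) (c * z + d),
      mul_div_mul_right _ _ (pow_ne_zero 2 hrC)]
  have hN : gammaC1 {z : ℂ | c * z + d = 0} = 0 := gamma_null_line c d hcd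
  have hae : (fun z => (a * z + b) / (c * z + d))
      =ᵐ[gammaC1] (fun z => α * ((u * z + v) / (-(conj' v) * z + conj' u)) + β) := by
    filter_upwards [compl_mem_ae_iff.2 hN] with z hz
    exact hmain z hz
  refine ⟨α, β, hα0, ?_⟩
  rw [Measure.map_congr hae]
  have h2 : (fun z => α * ((u * z + v) / (-(conj' v) * z + conj' u)) + β)
      = (fun w => α * w + β) ∘ (fun z => (u * z + v) / (-(conj' v) * z + conj' u)) := rfl
  rw [h2, ← Measure.map_map (by fun_prop) (by fun_prop), gamma_map_unitary u v huv]
end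

section
/- Let μ be a probability measure on ℂ^p such that μ(H_g) = 0 for every (p+1)×p complex matrix g of rank < p+1 acting as a projective map, where H_g is the image of ℂ^p under the corresponding map. Then the isotropy subgroup K_μ = {g ∈ GL(p+1,ℂ) : g·μ = μ, |det g| = 1} is a compact subgroup of GL(p+1,ℂ). -/
open MeasureTheory Real

/-- The generalized Möbius (projective) transformation associated with a `(p+1) × (p+1)`
complex matrix `g`, `M_g(z) = (az+b)/(cz+d)`. -/
noncomputable def mobius {p : ℕ} (g : Matrix (Fin (p+1)) (Fin (p+1)) ℂ) (z : Fin p → ℂ) :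
    Fin p → ℂ :=
  fun i => ((∑ j, g i.castSucc j.castSucc * z j) + g i.castSucc (Fin.last p)) /
    ((∑ j, g (Fin.last p) j.castSucc * z j) + g (Fin.last p) (Fin.last p))

namespace S10

open Filter Topology BoundedContinuousFunction
open scoped ENNReal NNReal

variable {p : ℕ}

/-- The affine functional given by row `i` of `g`. -/
noncomputable def aff (g : Matrix (Fin (p+1)) (Fin (p+1)) ℂ) (i : Fin (p+1)) (z : Fin p → ℂ) : ℂ :=
  (∑ j, g i j.castSucc * z j) + g i (Fin.last p)

lemma mobius_eq (g : Matrix (Fin (p+1)) (Fin (p+1)) ℂ) (z : Fin p → ℂ) :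
    mobius g z = fun i => aff g i.castSucc z / aff g (Fin.last p) z := rfl

lemma continuous_aff_g (i : Fin (p+1)) (z : Fin p → ℂ) :
    Continuous fun g : Matrix (Fin (p+1)) (Fin (p+1)) ℂ => aff g i z := by
  refine Continuous.add (continuous_finset_sum _ fun j _ => ?_) (continuous_id.matrix_elem _ _)
  exact (continuous_id.matrix_elem _ _).mul continuous_const

lemma continuous_aff_z (g : Matrix (Fin (p+1)) (Fin (p+1)) ℂ) (i : Fin (p+1)) :
    Continuous fun z : Fin p → ℂ => aff g i z := by
  refine Continuous.add (continuous_finset_sum _ fun j _ => ?_) continuous_const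
  exact continuous_const.mul (continuous_apply j)

lemma measurable_mobius (g : Matrix (Fin (p+1)) (Fin (p+1)) ℂ) : Measurable (mobius g) := by
  rw [show mobius g = fun z i => aff g i.castSucc z / aff g (Fin.last p) z from rfl]
  exact measurable_pi_lambda _ fun i =>
    ((continuous_aff_z g _).measurable).div ((continuous_aff_z g _).measurable)

lemma aff_smul (c : ℂ) (g : Matrix (Fin (p+1)) (Fin (p+1)) ℂ) (i : Fin (p+1)) (z : Fin p → ℂ) :
    aff (c • g) i z = c * aff g i z := by
  simp [aff, Matrix.smul_apply, smul_eq_mul, mul_add, Finset.mul_sum, mul_assoc]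

lemma mobius_smul {c : ℂ} (hc : c ≠ 0) (g : Matrix (Fin (p+1)) (Fin (p+1)) ℂ) :
    mobius (c • g) = mobius g := by
  funext z i
  rw [mobius_eq, mobius_eq]
  simp only [aff_smul]
  rw [mul_div_mul_left _ _ hc]

lemma rank_lt_of_col_zero (G : Matrix (Fin (p+1)) (Fin (p+1)) ℂ) (j₀ : Fin (p+1))
    (h : ∀ i, G i j₀ = 0) : G.rank < p + 1 := by
  classical
  have h1 : G.mulVecLin (Pi.single j₀ 1) = 0 := by
    ext i
    simp [Matrix.mulVecLin_apply, Matrix.mulVec, dotProduct, Pi.single_apply,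
      mul_ite, Finset.sum_ite_eq', h]
  have hker : Nontrivial (LinearMap.ker G.mulVecLin) := by
    refine ⟨⟨⟨Pi.single j₀ 1, h1⟩, 0, ?_⟩⟩
    intro hcontra
    have h2 : (Pi.single j₀ 1 : Fin (p+1) → ℂ) = 0 := congrArg Subtype.val hcontra
    have := congrFun h2 j₀
    simp [Pi.single_apply] at this
  have h3 := LinearMap.finrank_range_add_finrank_ker (G.mulVecLin)
  have h4 : 0 < Module.finrank ℂ (LinearMap.ker G.mulVecLin) := Module.finrank_pos
  have h5 : Module.finrank ℂ (Fin (p+1) → ℂ) = p + 1 := by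
    simp [Module.finrank_pi]
  have h6 : G.rank = Module.finrank ℂ (LinearMap.range G.mulVecLin) := rfl
  omega

/-- Key identity: a left-kernel vector of `g` gives a linear relation among the affine
functionals of the rows. -/
lemma key_id (M : Matrix (Fin (p+1)) (Fin (p+1)) ℂ) (v : Fin (p+1) → ℂ)
    (hv : Matrix.vecMul v M = 0) (z : Fin p → ℂ) :
    ∑ i, v i * aff M i z = 0 := by
  have hcol : ∀ k : Fin (p+1), ∑ i, v i * M i k = 0 := by
    intro k
    have := congrFun hv k
    simpa [Matrix.vecMul, dotProduct] using this
  calc ∑ i, v i * aff M i z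
      = ∑ i, ((∑ j, v i * M i j.castSucc * z j) + v i * M i (Fin.last p)) := by
        refine Finset.sum_congr rfl fun i _ => ?_
        rw [aff, mul_add, Finset.mul_sum]
        congr 1
        exact Finset.sum_congr rfl fun j _ => by ring
    _ = (∑ i, ∑ j, v i * M i j.castSucc * z j) + ∑ i, v i * M i (Fin.last p) :=
        Finset.sum_add_distrib
    _ = (∑ j, ∑ i, v i * M i j.castSucc * z j) + 0 := by rw [Finset.sum_comm, hcol (Fin.last p)]
    _ = ∑ j : Fin p, (∑ i, v i * M i j.castSucc) * z j := by
        rw [add_zero]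
        exact Finset.sum_congr rfl fun j _ => by rw [Finset.sum_mul]
    _ = 0 := by
        refine Finset.sum_eq_zero fun j _ => ?_
        rw [hcol j.castSucc, zero_mul]

variable (μ : Measure (Fin p → ℂ)) [IsProbabilityMeasure μ]

lemma hyper (hμ : ∀ g : Matrix (Fin (p+1)) (Fin (p+1)) ℂ, g.rank < p + 1 →
      μ (Set.range (mobius g)) = 0)
    (c : Fin p → ℂ) (hc : c ≠ 0) (e : ℂ) : μ {z | ∑ i, c i * z i = e} = 0 := by
  classical
  obtain ⟨i₀, hi₀⟩ : ∃ i, c i ≠ 0 := Function.ne_iff.mp hc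
  set G : Matrix (Fin (p+1)) (Fin (p+1)) ℂ := fun i j =>
    Fin.lastCases (Fin.lastCases 1 (fun _ => 0) j)
      (fun i' => Fin.lastCases (if i' = i₀ then e / c i₀ else 0)
        (fun j' => if i' = i₀ then (if j' = i₀ then 0 else -(c j' / c i₀))
          else (if j' = i' then 1 else 0)) j) i with hG
  have hGtt : ∀ i' j', G i'.castSucc j'.castSucc
      = if i' = i₀ then (if j' = i₀ then 0 else -(c j' / c i₀)) else (if j' = i' then 1 else 0) := by
    intro i' j'; simp [hG]
  have hGtl : ∀ i', G i'.castSucc (Fin.last p) = if i' = i₀ then e / c i₀ else 0 := by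
    intro i'; simp [hG]
  have hGlt : ∀ j' : Fin p, G (Fin.last p) j'.castSucc = 0 := by intro j'; simp [hG]
  have hGll : G (Fin.last p) (Fin.last p) = 1 := by simp [hG]
  have hcol : ∀ i, G i i₀.castSucc = 0 := by
    intro i
    refine Fin.lastCases ?_ ?_ i
    · exact hGlt i₀
    · intro i'
      rw [hGtt]
      by_cases hii : i' = i₀
      · simp [hii]
      · simp [hii, Ne.symm hii]
  have hrank : G.rank < p + 1 := rank_lt_of_col_zero G i₀.castSucc hcol
  refine measure_mono_null ?_ (hμ G hrank)
  intro w hw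
  simp only [Set.mem_setOf_eq] at hw
  refine ⟨w, ?_⟩
  have hden : aff G (Fin.last p) w = 1 := by
    simp [aff, hGlt, hGll]
  funext i
  rw [mobius_eq]
  simp only [hden, div_one]
  by_cases hii : i = i₀
  · subst hii
    have hS : ∑ j, G i.castSucc j.castSucc * w j
        = ∑ j ∈ Finset.univ.erase i, -(c j / c i) * w j := by
      rw [← Finset.sum_erase (s := Finset.univ) (a := i)
        (f := fun j => G i.castSucc j.castSucc * w j) (by simp [hGtt])]
      refine Finset.sum_congr rfl fun j hj => ?_
      rw [hGtt, if_pos rfl, if_neg (Finset.ne_of_mem_erase hj)]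
    have hS2 : ∑ j ∈ Finset.univ.erase i, -(c j / c i) * w j
        = -(∑ j ∈ Finset.univ.erase i, c j * w j) / c i := by
      calc ∑ j ∈ Finset.univ.erase i, -(c j / c i) * w j
          = ∑ j ∈ Finset.univ.erase i, -(c j * w j) / c i :=
            Finset.sum_congr rfl fun j _ => by ring
        _ = (∑ j ∈ Finset.univ.erase i, -(c j * w j)) / c i := (Finset.sum_div _ _ _).symm
        _ = -(∑ j ∈ Finset.univ.erase i, c j * w j) / c i := by
            rw [Finset.sum_neg_distrib]
    have hE : c i * w i + ∑ j ∈ Finset.univ.erase i, c j * w j = e :=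
      (Finset.add_sum_erase Finset.univ (fun j => c j * w j) (Finset.mem_univ i)).trans hw
    show aff G i.castSucc w = w i
    rw [aff, hS, hS2, hGtl, if_pos rfl]
    rw [← add_div, div_eq_iff hi₀]
    linear_combination -hE
  · show aff G i.castSucc w = w i
    rw [aff, hGtl, if_neg hii]
    have hrow : ∑ j, G i.castSucc j.castSucc * w j = w i := by
      have hterm : ∀ j : Fin p, G i.castSucc j.castSucc * w j = if j = i then w j else 0 := by
        intro j
        rw [hGtt, if_neg hii]
        by_cases hji : j = i <;> simp [hji]
      rw [Finset.sum_congr rfl fun j _ => hterm j]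
      simp
    rw [hrow, add_zero]

/-- Sets where a nonzero affine functional (given by a nonzero row) vanishes are null. -/
lemma affine_null (hμ : ∀ g : Matrix (Fin (p+1)) (Fin (p+1)) ℂ, g.rank < p + 1 →
      μ (Set.range (mobius g)) = 0)
    (g : Matrix (Fin (p+1)) (Fin (p+1)) ℂ) (i : Fin (p+1)) (h : ∃ j, g i j ≠ 0) :
    μ {z | aff g i z = 0} = 0 := by
  classical
  set c : Fin p → ℂ := fun j => g i j.castSucc with hcdef
  by_cases hc : c = 0
  · have hd : g i (Fin.last p) ≠ 0 := by
      obtain ⟨j, hj⟩ := h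
      refine Fin.lastCases ?_ ?_ j hj
      · exact fun hjj => hjj
      · intro j' hj'
        exact absurd (congrFun hc j') hj'
    have : {z : Fin p → ℂ | aff g i z = 0} = ∅ := by
      ext z
      simp only [Set.mem_setOf_eq, Set.mem_empty_iff_false, iff_false]
      intro hz
      rw [aff] at hz
      have : ∑ j, g i j.castSucc * z j = 0 := by
        refine Finset.sum_eq_zero fun j _ => ?_
        have h0 : g i j.castSucc = 0 := congrFun hc j
        rw [h0, zero_mul]
      rw [this, zero_add] at hz
      exact hd hz
    rw [this, measure_empty]
  · have : {z : Fin p → ℂ | aff g i z = 0} = {z | ∑ j, c j * z j = -(g i (Fin.last p))} := by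
      ext z
      simp only [Set.mem_setOf_eq, aff]
      constructor
      · intro hz; linear_combination hz
      · intro hz; linear_combination hz
    rw [this]
    exact hyper μ hμ c hc _

/-- The denominator vanishing set is null when the last row is nonzero. -/
lemma den_null (hμ : ∀ g : Matrix (Fin (p+1)) (Fin (p+1)) ℂ, g.rank < p + 1 →
      μ (Set.range (mobius g)) = 0)
    (g : Matrix (Fin (p+1)) (Fin (p+1)) ℂ) (h : ∃ j, g (Fin.last p) j ≠ 0) :
    μ {z | aff g (Fin.last p) z = 0} = 0 :=
  affine_null μ hμ g _ h

/-- Limits of mobius-measure-preserving matrices preserve the measure, provided the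
limit's denominator is a.e. nonzero. -/
lemma lemA (k : ℕ → Matrix (Fin (p+1)) (Fin (p+1)) ℂ) (g : Matrix (Fin (p+1)) (Fin (p+1)) ℂ)
    (hk : Tendsto k atTop (𝓝 g)) (hmap : ∀ n, Measure.map (mobius (k n)) μ = μ)
    (hden : μ {z | aff g (Fin.last p) z = 0} = 0) :
    Measure.map (mobius g) μ = μ := by
  haveI : IsProbabilityMeasure (Measure.map (mobius g) μ) :=
    Measure.isProbabilityMeasure_map (measurable_mobius g).aemeasurable
  refine ext_of_forall_lintegral_eq_of_IsFiniteMeasure (fun f => ?_)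
  have hfm : Measurable fun x : Fin p → ℂ => (f x : ℝ≥0∞) :=
    measurable_coe_nnreal_ennreal.comp f.continuous.measurable
  rw [lintegral_map hfm (measurable_mobius g)]
  have hae : ∀ᵐ z ∂μ, aff g (Fin.last p) z ≠ 0 := by
    rw [ae_iff]
    simpa using hden
  have hconst : ∀ n, (∫⁻ z, (f (mobius (k n) z) : ℝ≥0∞) ∂μ) = ∫⁻ x, (f x : ℝ≥0∞) ∂μ := by
    intro n
    conv_rhs => rw [← hmap n]
    rw [lintegral_map hfm (measurable_mobius (k n))]
  have htend : Tendsto (fun n => ∫⁻ z, (f (mobius (k n) z) : ℝ≥0∞) ∂μ) atTop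
      (𝓝 (∫⁻ z, (f (mobius g z) : ℝ≥0∞) ∂μ)) := by
    refine tendsto_lintegral_of_dominated_convergence (fun _ => ((nndist 0 f : ℝ≥0) : ℝ≥0∞))
      (fun n => (hfm.comp (measurable_mobius (k n)))) (fun n => ?_)
      (by simp [lintegral_const, edist_ne_top]) ?_
    · exact Filter.Eventually.of_forall fun z =>
        ENNReal.coe_le_coe.mpr (f.apply_le_nndist_zero _)
    · refine hae.mono fun z hz => ?_
      have hmz : Tendsto (fun n => mobius (k n) z) atTop (𝓝 (mobius g z)) := by
        rw [tendsto_pi_nhds]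
        intro i
        have h1 : Tendsto (fun n => aff (k n) i.castSucc z) atTop (𝓝 (aff g i.castSucc z)) :=
          ((continuous_aff_g i.castSucc z).tendsto g).comp hk
        have h2 : Tendsto (fun n => aff (k n) (Fin.last p) z) atTop
            (𝓝 (aff g (Fin.last p) z)) := ((continuous_aff_g _ z).tendsto g).comp hk
        exact h1.div h2 hz
      exact (ENNReal.tendsto_coe.mpr ((f.continuous.tendsto _).comp hmz))
  simp_rw [hconst] at htend
  exact (tendsto_nhds_unique tendsto_const_nhds htend).symm

/-- The main compactness result, stated on the function space `Fin (p+1) → Fin (p+1) → ℂ`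
(definitionally equal to the matrix space) so that all metric/norm instances are available. -/
lemma key (hμ : ∀ g : Matrix (Fin (p+1)) (Fin (p+1)) ℂ, g.rank < p + 1 →
      μ (Set.range (mobius g)) = 0) :
    IsCompact {g : Fin (p+1) → Fin (p+1) → ℂ |
      Measure.map (mobius g) μ = μ ∧ ‖Matrix.det g‖ = 1} := by
  classical
  haveI : ProperSpace (Fin (p+1) → Fin (p+1) → ℂ) := by infer_instance
  set Kset : Set (Fin (p+1) → Fin (p+1) → ℂ) :=
    {g | Measure.map (mobius g) μ = μ ∧ ‖Matrix.det g‖ = 1} with hKset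
  have hlastrow : ∀ g : Matrix (Fin (p+1)) (Fin (p+1)) ℂ, g.det ≠ 0 →
      ∃ j, g (Fin.last p) j ≠ 0 := by
    intro g hg
    by_contra hno
    push_neg at hno
    exact hg (Matrix.det_eq_zero_of_row_eq_zero (Fin.last p) hno)
  have hclosed : IsClosed Kset := by
    refine IsSeqClosed.isClosed ?_
    intro x g hx hlim
    have hdet : ‖Matrix.det g‖ = 1 := by
      have hc : Tendsto (fun n => ‖Matrix.det (x n)‖) atTop
          (𝓝 (‖Matrix.det g‖)) :=
        ((continuous_norm.comp continuous_id.matrix_det).tendsto g).comp hlim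
      simp only [fun n => (hx n).2] at hc
      exact tendsto_nhds_unique hc tendsto_const_nhds
    refine ⟨?_, hdet⟩
    refine lemA μ x g hlim (fun n => (hx n).1) ?_
    refine den_null μ hμ g (hlastrow g ?_)
    intro h0
    rw [h0] at hdet
    simp at hdet
  have hbdd : Bornology.IsBounded Kset := by
    by_contra hbd
    have hex : ∀ n : ℕ, ∃ g, g ∈ Kset ∧ ((n : ℝ) + 1) ≤ ‖g‖ := by
      intro n
      by_contra hno
      push_neg at hno
      exact hbd (isBounded_iff_forall_norm_le.mpr ⟨(n : ℝ) + 1, fun g hg => (hno g hg).le⟩)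
    choose x hxK hxn using hex
    have hrpos : ∀ n, 0 < ‖x n‖ := fun n => lt_of_lt_of_le (by positivity) (hxn n)
    have hdetx : ∀ n, Matrix.det (x n) ≠ 0 := by
      intro n h0
      have := (hxK n).2
      rw [h0] at this
      simp at this
    set y : ℕ → (Fin (p+1) → Fin (p+1) → ℂ) := fun n => ((‖x n‖ : ℂ))⁻¹ • x n with hy
    have hsmul_ne : ∀ n, ((‖x n‖ : ℂ))⁻¹ ≠ 0 := fun n =>
      inv_ne_zero (by exact_mod_cast Complex.ofReal_ne_zero.mpr (hrpos n).ne')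
    have hmoby : ∀ n, mobius (y n) = mobius (x n) := fun n => mobius_smul (hsmul_ne n) (x n)
    have hnorm : ∀ n, ‖y n‖ = 1 := by
      intro n
      simp only [hy]
      rw [norm_smul, norm_inv, Complex.norm_real, Real.norm_eq_abs, abs_of_pos (hrpos n)]
      exact inv_mul_cancel₀ (hrpos n).ne'
    have hdety : ∀ n, Matrix.det (y n) ≠ 0 := by
      intro n
      simp only [hy]
      rw [show Matrix.det (((‖x n‖ : ℂ))⁻¹ • x n) = ((‖x n‖ : ℂ))⁻¹ ^ Fintype.card (Fin (p+1))
          * Matrix.det (x n) from Matrix.det_smul (x n : Matrix (Fin (p+1)) (Fin (p+1)) ℂ) _]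
      exact mul_ne_zero (pow_ne_zero _ (hsmul_ne n)) (hdetx n)
    have hsph : ∀ n, y n ∈ Metric.sphere (0 : Fin (p+1) → Fin (p+1) → ℂ) 1 := fun n => by
      rw [mem_sphere_zero_iff_norm]
      exact hnorm n
    obtain ⟨h₀, h₀mem, φ, hφ, hlim⟩ := (isCompact_sphere
      (0 : Fin (p+1) → Fin (p+1) → ℂ) 1).tendsto_subseq hsph
    have hnorm₀ : ‖h₀‖ = 1 := mem_sphere_zero_iff_norm.mp h₀mem
    have habsdet : ∀ n, ‖Matrix.det (y n)‖ = ‖x n‖⁻¹ ^ (p+1) := by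
      intro n
      simp only [hy]
      rw [show Matrix.det (((‖x n‖ : ℂ))⁻¹ • x n) = ((‖x n‖ : ℂ))⁻¹ ^ Fintype.card (Fin (p+1))
          * Matrix.det (x n) from Matrix.det_smul (x n : Matrix (Fin (p+1)) (Fin (p+1)) ℂ) _,
        norm_mul, norm_pow, norm_inv, Complex.norm_real, Real.norm_eq_abs,
        abs_of_pos (hrpos n), (hxK n).2, mul_one, Fintype.card_fin]
    have hdet₀ : Matrix.det h₀ = 0 := by
      have h1 : Tendsto (fun n => ‖Matrix.det (y (φ n))‖) atTop
          (𝓝 (‖Matrix.det h₀‖)) :=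
        ((continuous_norm.comp continuous_id.matrix_det).tendsto h₀).comp hlim
      simp only [habsdet] at h1
      have hxφ : Tendsto (fun n => ‖x (φ n)‖) atTop atTop := by
        refine tendsto_atTop_mono (fun n => ?_) tendsto_natCast_atTop_atTop
        calc (n : ℝ) ≤ (φ n : ℝ) := Nat.cast_le.mpr hφ.le_apply
          _ ≤ (φ n : ℝ) + 1 := by linarith
          _ ≤ ‖x (φ n)‖ := hxn (φ n)
      have h3 : Tendsto (fun n => ‖x (φ n)‖⁻¹ ^ (p+1)) atTop (𝓝 0) := by
        have hinv : Tendsto (fun n => ‖x (φ n)‖⁻¹) atTop (𝓝 0) :=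
          tendsto_inv_atTop_zero.comp hxφ
        simpa using hinv.pow (p+1)
      have := tendsto_nhds_unique h1 h3
      exact norm_eq_zero.mp this
    have hmapφ : ∀ n, Measure.map (mobius (y (φ n))) μ = μ := fun n => by
      rw [hmoby]
      exact (hxK (φ n)).1
    by_cases hlast : ∃ j, h₀ (Fin.last p) j ≠ 0
    · -- the limit has nonzero last row: its mobius map pushes μ into a null hyperplane
      have hmap0 : Measure.map (mobius h₀) μ = μ :=
        lemA μ (fun n => y (φ n)) h₀ hlim hmapφ (den_null μ hμ h₀ hlast)
      obtain ⟨v, hv0, hv⟩ : ∃ v, v ≠ 0 ∧ Matrix.vecMul v h₀ = 0 := by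
        obtain ⟨v, hv0, hv⟩ := Matrix.exists_vecMul_eq_zero_iff.mpr hdet₀
        exact ⟨v, hv0, hv⟩
      set c : Fin p → ℂ := fun i => v i.castSucc with hc
      have hcne : c ≠ 0 := by
        intro hc0
        have hvlast : v (Fin.last p) ≠ 0 := by
          intro hvl
          apply hv0
          funext i
          refine Fin.lastCases hvl (fun i' => ?_) i
          exact congrFun hc0 i'
        obtain ⟨j, hj⟩ := hlast
        apply hj
        have hcolj : ∑ i, v i * h₀ i j = 0 := by
          have := congrFun hv j
          simpa [Matrix.vecMul, dotProduct] using this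
        rw [Fin.sum_univ_castSucc] at hcolj
        have hz : ∑ i : Fin p, v i.castSucc * h₀ i.castSucc j = 0 := by
          refine Finset.sum_eq_zero fun i _ => ?_
          have : v i.castSucc = 0 := congrFun hc0 i
          rw [this, zero_mul]
        rw [hz, zero_add] at hcolj
        exact (mul_eq_zero.mp hcolj).resolve_left hvlast
      set S : Set (Fin p → ℂ) := {w | ∑ i, c i * w i = -(v (Fin.last p))} with hS
      have hSnull : μ S = 0 := hyper μ hμ c hcne _
      have hSmeas : MeasurableSet S := by
        refine IsClosed.measurableSet ?_
        have : Continuous fun w : Fin p → ℂ => ∑ i, c i * w i :=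
          continuous_finset_sum _ fun i _ => continuous_const.mul (continuous_apply i)
        exact isClosed_eq this continuous_const
      have hsub : {z | aff h₀ (Fin.last p) z ≠ 0} ⊆ mobius h₀ ⁻¹' S := by
        intro z hz
        simp only [Set.mem_setOf_eq] at hz
        show ∑ i, c i * mobius h₀ z i = -(v (Fin.last p))
        have hkey := key_id h₀ v hv z
        rw [Fin.sum_univ_castSucc] at hkey
        have hcalc : ∑ i : Fin p, c i * mobius h₀ z i
            = (∑ i : Fin p, c i * aff h₀ i.castSucc z) / aff h₀ (Fin.last p) z := by
          rw [Finset.sum_div]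
          refine Finset.sum_congr rfl fun i _ => ?_
          show c i * (aff h₀ i.castSucc z / aff h₀ (Fin.last p) z) = _
          ring
        rw [hcalc, div_eq_iff hz]
        linear_combination hkey
      have h1 : μ {z | aff h₀ (Fin.last p) z ≠ 0} = 1 := by
        have hcompl : {z | aff h₀ (Fin.last p) z ≠ 0} = {z | aff h₀ (Fin.last p) z = 0}ᶜ := by
          ext z; simp
        rw [hcompl, prob_compl_eq_one_sub (s := {z | aff h₀ (Fin.last p) z = 0})
          ((isClosed_eq (continuous_aff_z _ _) continuous_const).measurableSet),
          den_null μ hμ h₀ hlast]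
        simp
      have h2 : (1 : ℝ≥0∞) ≤ μ S := by
        calc (1 : ℝ≥0∞) = μ {z | aff h₀ (Fin.last p) z ≠ 0} := h1.symm
          _ ≤ μ (mobius h₀ ⁻¹' S) := measure_mono hsub
          _ = (Measure.map (mobius h₀) μ) S :=
            (Measure.map_apply (measurable_mobius h₀) hSmeas).symm
          _ = μ S := by rw [hmap0]
      rw [hSnull] at h2
      exact absurd h2 (by simp)
    · -- the limit has zero last row: mass escapes to infinity
      push_neg at hlast
      obtain ⟨i₁, j₁, hij⟩ : ∃ i₁ : Fin p, ∃ j₁, h₀ i₁.castSucc j₁ ≠ 0 := by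
        by_contra hno
        push_neg at hno
        have hzero : h₀ = 0 := by
          funext i j
          refine Fin.lastCases (hlast j) (fun i' => hno i' j) i
        rw [hzero] at hnorm₀
        simp at hnorm₀
      set Z : ℕ → Set (Fin p → ℂ) := fun n => {z | aff (y (φ n)) (Fin.last p) z = 0} with hZ
      have hZnull : ∀ n, μ (Z n) = 0 := fun n =>
        den_null μ hμ _ (hlastrow _ (hdety (φ n)))
      set W : Set (Fin p → ℂ) := {z | aff h₀ i₁.castSucc z = 0} with hW
      have hWnull : μ W = 0 := affine_null μ hμ h₀ _ ⟨j₁, hij⟩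
      set E : Set (Fin p → ℂ) := W ∪ ⋃ n, Z n with hE
      have hEnull : μ E = 0 := measure_union_null hWnull (measure_iUnion_null hZnull)
      have hEmeas : MeasurableSet E := by
        refine MeasurableSet.union ?_ (MeasurableSet.iUnion fun n => ?_)
        · exact (isClosed_eq (continuous_aff_z _ _) continuous_const).measurableSet
        · exact (isClosed_eq (continuous_aff_z _ _) continuous_const).measurableSet
      have hescape : ∀ z ∉ E, Tendsto (fun n => ‖mobius (y (φ n)) z i₁‖)
          atTop atTop := by
        intro z hz
        rw [hE, Set.mem_union] at hz
        push_neg at hz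
        obtain ⟨hzW, hzZ⟩ := hz
        have hzW' : aff h₀ i₁.castSucc z ≠ 0 := hzW
        have hzZ' : ∀ n, aff (y (φ n)) (Fin.last p) z ≠ 0 := by
          intro n hcontra
          exact hzZ (Set.mem_iUnion.mpr ⟨n, hcontra⟩)
        have ha : Tendsto (fun n => ‖aff (y (φ n)) i₁.castSucc z‖) atTop
            (𝓝 (‖aff h₀ i₁.castSucc z‖)) :=
          ((continuous_norm.comp (continuous_aff_g _ z)).tendsto h₀).comp hlim
        have hb : Tendsto (fun n => ‖aff (y (φ n)) (Fin.last p) z‖) atTop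
            (𝓝 0) := by
          have h0 : aff h₀ (Fin.last p) z = 0 := by
            show (∑ j, h₀ (Fin.last p) j.castSucc * z j) + h₀ (Fin.last p) (Fin.last p) = 0
            simp [hlast]
          have hb0 : Tendsto (fun n => ‖aff (y (φ n)) (Fin.last p) z‖) atTop
              (𝓝 (‖aff h₀ (Fin.last p) z‖)) :=
            ((continuous_norm.comp
              (continuous_aff_g (Fin.last p) z)).tendsto h₀).comp hlim
          rw [h0] at hb0
          simpa using hb0
        have hbpos : ∀ n, 0 < ‖aff (y (φ n)) (Fin.last p) z‖ := fun n =>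
          norm_pos_iff.mpr (hzZ' n)
        have hbinv : Tendsto (fun n => (‖aff (y (φ n)) (Fin.last p) z‖)⁻¹)
            atTop atTop := by
          refine tendsto_inv_nhdsGT_zero.comp ?_
          exact tendsto_nhdsWithin_of_tendsto_nhds_of_eventually_within _ hb
            (Filter.Eventually.of_forall fun n => hbpos n)
        have hapos : 0 < ‖aff h₀ i₁.castSucc z‖ := norm_pos_iff.mpr hzW'
        have hmul := Filter.Tendsto.pos_mul_atTop hapos ha hbinv
        refine hmul.congr fun n => ?_
        show _ = ‖aff (y (φ n)) i₁.castSucc z / aff (y (φ n)) (Fin.last p) z‖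
        rw [norm_div, div_eq_mul_inv]
      have hball : ∀ R : ℕ, μ (Metric.closedBall (0 : Fin p → ℂ) R) = 0 := by
        intro R
        set A : ℕ → Set (Fin p → ℂ) := fun n => mobius (y (φ n)) ⁻¹' Metric.closedBall 0 R
          with hA
        have hAmeas : ∀ n, MeasurableSet (A n) := fun n =>
          (measurable_mobius _) measurableSet_closedBall
        have hAmeasure : ∀ n, μ (A n) = μ (Metric.closedBall 0 R) := by
          intro n
          calc μ (A n) = (Measure.map (mobius (y (φ n))) μ) (Metric.closedBall 0 R) :=
              (Measure.map_apply (measurable_mobius _) measurableSet_closedBall).symm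
            _ = μ (Metric.closedBall 0 R) := by rw [hmapφ n]
        set B : ℕ → Set (Fin p → ℂ) := fun m => ⋂ n, ⋂ (_ : m ≤ n), (A n)ᶜ with hB
        have hBmeas : ∀ m, MeasurableSet (B m) := fun m =>
          MeasurableSet.iInter fun n => MeasurableSet.iInter fun _ => (hAmeas n).compl
        have hBmono : Monotone B := by
          intro a b hab z hz
          simp only [hB, Set.mem_iInter] at hz ⊢
          intro n hn
          exact hz n (hab.trans hn)
        have hcover : Eᶜ ⊆ ⋃ m, B m := by
          intro z hz
          have hesc := hescape z hz
          obtain ⟨m, hm⟩ := Filter.eventually_atTop.mp (Filter.tendsto_atTop.mp hesc ((R : ℝ) + 1))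
          rw [Set.mem_iUnion]
          refine ⟨m, ?_⟩
          simp only [hB, Set.mem_iInter]
          intro n hn hzA
          have hdist : dist (mobius (y (φ n)) z) 0 ≤ R := Metric.mem_closedBall.mp hzA
          have hcoord : ‖mobius (y (φ n)) z i₁‖ ≤ R := by
            have := dist_le_pi_dist (mobius (y (φ n)) z) 0 i₁
            rw [Complex.dist_eq] at this
            simpa using this.trans hdist
          have := hm n hn
          linarith
        have h1 : (1 : ℝ≥0∞) ≤ ⨆ m, μ (B m) := by
          have hEc : μ Eᶜ = 1 := by
            rw [prob_compl_eq_one_sub hEmeas, hEnull]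
            simp
          calc (1 : ℝ≥0∞) = μ Eᶜ := hEc.symm
            _ ≤ μ (⋃ m, B m) := measure_mono hcover
            _ = ⨆ m, μ (B m) := Directed.measure_iUnion (hBmono.directed_le)
        have h2 : ∀ m, μ (Metric.closedBall (0 : Fin p → ℂ) R) + μ (B m) ≤ 1 := by
          intro m
          rw [← hAmeasure m]
          have hdisj : Disjoint (A m) (B m) := by
            refine Set.disjoint_left.mpr fun z hzA hzB => ?_
            have hzc : z ∈ (A m)ᶜ := by
              simp only [hB, Set.mem_iInter] at hzB
              exact hzB m le_rfl
            exact hzc hzA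
          calc μ (A m) + μ (B m) = μ (A m ∪ B m) := (measure_union hdisj (hBmeas m)).symm
            _ ≤ μ Set.univ := measure_mono (Set.subset_univ _)
            _ = 1 := measure_univ
        have h3 : μ (Metric.closedBall (0 : Fin p → ℂ) R) + 1 ≤ 0 + 1 := by
          rw [zero_add]
          calc μ (Metric.closedBall (0 : Fin p → ℂ) R) + 1
              ≤ μ (Metric.closedBall (0 : Fin p → ℂ) R) + ⨆ m, μ (B m) :=
                add_le_add_right h1 _
            _ = ⨆ m, (μ (Metric.closedBall (0 : Fin p → ℂ) R) + μ (B m)) := by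
                rw [ENNReal.add_iSup]
            _ ≤ 1 := iSup_le h2
        have h4 := ENNReal.le_of_add_le_add_right (by simp : (1 : ℝ≥0∞) ≠ ⊤) h3
        exact le_antisymm h4 zero_le
      have huniv : μ Set.univ = 0 := by
        refine measure_mono_null ?_ (measure_iUnion_null fun R : ℕ =>
          hball R)
        intro z _
        rw [Set.mem_iUnion]
        refine ⟨⌈‖z‖⌉₊, ?_⟩
        rw [Metric.mem_closedBall, dist_zero_right]
        exact Nat.le_ceil _
      rw [measure_univ] at huniv
      exact one_ne_zero huniv
  exact Metric.isCompact_of_isClosed_isBounded hclosed hbdd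

end S10

/-- If `μ` gives no mass to the image `H_g` of ℂ^p under any degenerate projective map
(`rank g < p+1`), then the isotropy subgroup
`K_μ = {g ∈ GL(p+1,ℂ) : g·μ = μ, |det g| = 1}` is compact. -/
theorem stmt10 (p : ℕ) (μ : Measure (Fin p → ℂ)) [IsProbabilityMeasure μ]
    (hμ : ∀ g : Matrix (Fin (p+1)) (Fin (p+1)) ℂ, g.rank < p + 1 →
      μ (Set.range (mobius g)) = 0) :
    IsCompact {g : Matrix (Fin (p+1)) (Fin (p+1)) ℂ |
      Measure.map (mobius g) μ = μ ∧ ‖g.det‖ = 1} := S10.key μ hμ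
end
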